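/- For each 0 < κ < 1/4 and K > 0, the set D' = {ω ∈ [0,2π]^n : |k·ω + j| ≥ κ(1+|j|) for all j ∈ ℤ and all k ∈ ℤ^n \ {0} with |k| ≤ K} satisfies Meas([0,2π]^n \ D') ≤ c(n) K^{n+1} κ, where c(n) depends only on n. -/

import Mathlib

open MeasureTheory Real
open scoped ENNReal

/-- 1-D estimate: the set where `|a t + c| < δ` is an interval of length `2δ/|a|`. -/
lemma melnikov_interval_bound (a c δ : ℝ) (ha : a ≠ 0) :
    volume {t : ℝ | |a * t + c| < δ} ≤ ENNReal.ofReal (2 * (δ / |a|)) := by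
  have ha' : 0 < |a| := abs_pos.2 ha
  have hsub : {t : ℝ | |a * t + c| < δ} ⊆ Metric.ball (-c / a) (δ / |a|) := by
    intro t ht
    simp only [Set.mem_setOf_eq] at ht
    rw [Metric.mem_ball, Real.dist_eq]
    have he : t - -c / a = (a * t + c) / a := by field_simp; ring
    rw [he, abs_div]
    exact (div_lt_div_iff_of_pos_right ha').2 ht
  calc volume {t : ℝ | |a * t + c| < δ} ≤ volume (Metric.ball (-c / a) (δ / |a|)) :=
        measure_mono hsub
    _ = ENNReal.ofReal (2 * (δ / |a|)) := Real.volume_ball _ _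

/-- Slab estimate: the measure of the part of the box `[0,2π]^{m+1}` where
`|k·ω + c| < δ` is at most `(2π)^m · 2δ/|k i₀|` for any `i₀` with `k i₀ ≠ 0`. -/
lemma melnikov_slab_bound (m : ℕ) (k : Fin (m + 1) → ℤ) (i₀ : Fin (m + 1)) (hk : k i₀ ≠ 0)
    (c δ : ℝ) :
    volume ((Set.univ.pi fun _ : Fin (m + 1) => Set.Icc (0 : ℝ) (2 * π)) ∩
      {ω : Fin (m + 1) → ℝ | |(∑ i, (k i : ℝ) * ω i) + c| < δ}) ≤
    ENNReal.ofReal ((2 * π) ^ m * (2 * (δ / |(k i₀ : ℝ)|))) := by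
  have ha : ((k i₀ : ℝ)) ≠ 0 := Int.cast_ne_zero.2 hk
  set A := (Set.univ.pi fun _ : Fin (m + 1) => Set.Icc (0 : ℝ) (2 * π)) ∩
      {ω : Fin (m + 1) → ℝ | |(∑ i, (k i : ℝ) * ω i) + c| < δ} with hA
  have hfmeas : Measurable fun ω : Fin (m + 1) → ℝ => |(∑ i, (k i : ℝ) * ω i) + c| := by
    apply Measurable.abs
    apply Measurable.add_const
    exact Finset.measurable_sum _ fun i _ => (measurable_pi_apply i).const_mul _
  have hmeasA : MeasurableSet A := by
    refine (MeasurableSet.univ_pi fun i => measurableSet_Icc).inter ?_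
    exact measurableSet_lt hfmeas measurable_const
  set e := MeasurableEquiv.piFinSuccAbove (fun _ : Fin (m + 1) => ℝ) i₀ with he
  have mp := (measurePreserving_piFinSuccAbove (fun _ : Fin (m + 1) => (volume : Measure ℝ)) i₀).symm
  have hvol : volume A = ((volume : Measure ℝ).prod
      (Measure.pi fun _ : Fin m => (volume : Measure ℝ))) (e.symm ⁻¹' A) := by
    rw [show (volume : Measure (Fin (m + 1) → ℝ)) = Measure.pi fun _ => volume from volume_pi]
    exact (mp.measure_preimage hmeasA.nullMeasurableSet).symm
  have hmeasB : MeasurableSet (e.symm ⁻¹' A) := e.symm.measurable hmeasA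
  rw [hvol, Measure.prod_apply_symm hmeasB]
  -- slice bound
  set BoxM := Set.univ.pi fun _ : Fin m => Set.Icc (0 : ℝ) (2 * π) with hBoxM
  have hslice : ∀ y : Fin m → ℝ,
      volume ((fun t => (t, y)) ⁻¹' (e.symm ⁻¹' A)) ≤
      BoxM.indicator (fun _ => ENNReal.ofReal (2 * (δ / |(k i₀ : ℝ)|))) y := by
    intro y
    have hsum : ∀ t : ℝ, (∑ i, (k i : ℝ) * (e.symm (t, y)) i) =
        (k i₀ : ℝ) * t + ∑ j, (k (i₀.succAbove j) : ℝ) * y j := by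
      intro t
      rw [Fin.sum_univ_succAbove (fun i => (k i : ℝ) * (e.symm (t, y)) i) i₀]
      simp [he, MeasurableEquiv.piFinSuccAbove_symm_apply]
    by_cases hy : y ∈ BoxM
    · rw [Set.indicator_of_mem hy]
      refine le_trans (measure_mono ?_)
        (melnikov_interval_bound (k i₀ : ℝ) ((∑ j, (k (i₀.succAbove j) : ℝ) * y j) + c) δ ha)
      intro t ht
      obtain ⟨-, ht2⟩ := ht
      simp only [Set.mem_setOf_eq] at ht2 ⊢
      rw [hsum t] at ht2
      rw [show (k i₀ : ℝ) * t + ((∑ j, (k (i₀.succAbove j) : ℝ) * y j) + c)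
          = ((k i₀ : ℝ) * t + ∑ j, (k (i₀.succAbove j) : ℝ) * y j) + c by ring]
      exact ht2
    · rw [Set.indicator_of_notMem hy]
      have : ((fun t => (t, y)) ⁻¹' (e.symm ⁻¹' A)) = ∅ := by
        ext t
        simp only [Set.mem_preimage, Set.mem_empty_iff_false, iff_false]
        intro ht
        obtain ⟨hbox, -⟩ := ht
        refine hy fun j _ => ?_
        have := hbox (i₀.succAbove j) (Set.mem_univ _)
        simpa [he, MeasurableEquiv.piFinSuccAbove_symm_apply] using this
      rw [this, measure_empty]
  calc ∫⁻ y, volume ((fun t => (t, y)) ⁻¹' (e.symm ⁻¹' A))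
        ∂(Measure.pi fun _ : Fin m => (volume : Measure ℝ))
      ≤ ∫⁻ y, BoxM.indicator (fun _ => ENNReal.ofReal (2 * (δ / |(k i₀ : ℝ)|))) y
        ∂(Measure.pi fun _ : Fin m => (volume : Measure ℝ)) := lintegral_mono hslice
    _ = ENNReal.ofReal (2 * (δ / |(k i₀ : ℝ)|)) *
        (Measure.pi fun _ : Fin m => (volume : Measure ℝ)) BoxM :=
        lintegral_indicator_const (MeasurableSet.univ_pi fun i => measurableSet_Icc) _
    _ ≤ ENNReal.ofReal ((2 * π) ^ m * (2 * (δ / |(k i₀ : ℝ)|))) := by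
        have hπ : (0 : ℝ) ≤ 2 * π := by positivity
        have hBM : (Measure.pi fun _ : Fin m => (volume : Measure ℝ)) BoxM
            = (ENNReal.ofReal (2 * π)) ^ m := by
          rw [hBoxM, ← volume_pi, volume_pi_pi]
          simp [Real.volume_Icc]
        rw [hBM, ← ENNReal.ofReal_pow hπ, ← ENNReal.ofReal_mul' (by positivity)]
        exact le_of_eq (by rw [mul_comm])

set_option maxHeartbeats 2000000 in
/-- Second Melnikov measure estimate: for `0 < κ < 1/4` and `K > 0`, the set of
frequencies `ω ∈ [0,2π]^n` satisfying `|k·ω + j| ≥ κ(1+|j|)` for all integers `j`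
and all nonzero integer vectors `k` with sup-norm at most `K` has complement of
measure at most `c(n) K^(n+1) κ`. -/
theorem melnikov_measure_estimate (n : ℕ) :
    ∃ c > 0, ∀ (κ K : ℝ), 0 < κ → κ < 1/4 → 0 < K →
      volume ((Set.univ.pi fun _ : Fin n => Set.Icc (0:ℝ) (2*π)) \
        {ω : Fin n → ℝ | ω ∈ (Set.univ.pi fun _ : Fin n => Set.Icc (0:ℝ) (2*π)) ∧
          ∀ (j : ℤ) (k : Fin n → ℤ), k ≠ 0 → (∀ i, (|k i| : ℝ) ≤ K) →
            κ * (1 + |(j : ℝ)|) ≤ |(∑ i, (k i : ℝ) * ω i) + (j : ℝ)|}) ≤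
      ENNReal.ofReal (c * K ^ (n+1) * κ) := by
  rcases n with _ | m
  · -- n = 0 : no nonzero k exists, the bad set is empty
    refine ⟨1, one_pos, fun κ K hκ hκ4 hK => ?_⟩
    have hempty : ((Set.univ.pi fun _ : Fin 0 => Set.Icc (0:ℝ) (2*π)) \
        {ω : Fin 0 → ℝ | ω ∈ (Set.univ.pi fun _ : Fin 0 => Set.Icc (0:ℝ) (2*π)) ∧
          ∀ (j : ℤ) (k : Fin 0 → ℤ), k ≠ 0 → (∀ i, (|k i| : ℝ) ≤ K) →
            κ * (1 + |(j : ℝ)|) ≤ |(∑ i, (k i : ℝ) * ω i) + (j : ℝ)|}) = ∅ := by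
      ext ω
      simp only [Set.mem_diff, Set.mem_empty_iff_false, iff_false]
      rintro ⟨hbox, hnot⟩
      exact hnot ⟨hbox, fun j k hk _ => absurd (Subsingleton.elim k 0) hk⟩
    rw [hempty, measure_empty]
    exact zero_le
  -- main case : n = m + 1
  set n := m + 1 with hn
  refine ⟨552 * (n : ℝ)^2 * 3^n * (2*π)^n + 1, by positivity, fun κ K hκ hκ4 hK => ?_⟩
  set Box := Set.univ.pi fun _ : Fin n => Set.Icc (0:ℝ) (2*π) with hBox
  set K' : ℤ := ⌊K⌋ with hK'
  have hK'0 : 0 ≤ K' := Int.le_floor.2 (by exact_mod_cast hK.le)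
  have hK'K : (K' : ℝ) ≤ K := Int.floor_le K
  set S : Finset (Fin n → ℤ) := (Finset.Icc (fun _ => -K') (fun _ => K')).erase 0 with hS
  set a : (Fin n → ℤ) → ℕ := fun k => Finset.univ.sup fun i => (k i).natAbs with ha
  set T : (Fin n → ℤ) → Finset ℤ :=
    fun k => Finset.Icc (-(11 * n * a k : ℤ)) (11 * n * a k) with hT
  set slab : (Fin n → ℤ) → ℤ → Set (Fin n → ℝ) := fun k j =>
    Box ∩ {ω : Fin n → ℝ | |(∑ i, (k i : ℝ) * ω i) + (j : ℝ)| < κ * (1 + |(j : ℝ)|)}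
    with hslab
  -- basic facts about a k
  have ha_le : ∀ (k : Fin n → ℤ) (i : Fin n), (k i).natAbs ≤ a k := by
    intro k i
    simp only [ha]
    exact Finset.le_sup (f := fun i => (k i).natAbs) (Finset.mem_univ i)
  have ha_pos : ∀ k : Fin n → ℤ, k ≠ 0 → 1 ≤ a k := by
    intro k hk
    obtain ⟨i, hi⟩ := Function.ne_iff.1 hk
    exact le_trans (Int.natAbs_pos.2 hi) (ha_le k i)
  -- bound on |k·ω| for ω in the box
  have hsum_bound : ∀ (k : Fin n → ℤ) (ω : Fin n → ℝ), ω ∈ Box →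
      |∑ i, (k i : ℝ) * ω i| ≤ 8 * n * a k := by
    intro k ω hω
    have hπ4 : π ≤ 4 := Real.pi_le_four
    calc |∑ i, (k i : ℝ) * ω i| ≤ ∑ i, |(k i : ℝ) * ω i| := Finset.abs_sum_le_sum_abs _ _
      _ ≤ ∑ _i : Fin n, (a k : ℝ) * 8 := by
          refine Finset.sum_le_sum fun i _ => ?_
          rw [abs_mul]
          have h1 : |(k i : ℝ)| ≤ (a k : ℝ) := by
            have h2 : (((k i).natAbs : ℕ) : ℝ) ≤ (a k : ℝ) := by exact_mod_cast ha_le k i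
            rwa [Nat.cast_natAbs, Int.cast_abs] at h2
          have h2 : |ω i| ≤ 8 := by
            have := hω i (Set.mem_univ i)
            obtain ⟨h0, h2π⟩ := this
            rw [abs_of_nonneg h0]
            nlinarith
          have h3 : (0:ℝ) ≤ |(k i : ℝ)| := abs_nonneg _
          have h4 : (0:ℝ) ≤ |ω i| := abs_nonneg _
          nlinarith
      _ = 8 * n * a k := by
          rw [Finset.sum_const, Finset.card_univ, Fintype.card_fin]
          push_cast; ring
  -- the inclusion of the bad set in a finite union of slabs
  have hincl : (Box \ {ω : Fin n → ℝ | ω ∈ Box ∧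
      ∀ (j : ℤ) (k : Fin n → ℤ), k ≠ 0 → (∀ i, (|k i| : ℝ) ≤ K) →
        κ * (1 + |(j : ℝ)|) ≤ |(∑ i, (k i : ℝ) * ω i) + (j : ℝ)|}) ⊆
      ⋃ k ∈ S, ⋃ j ∈ T k, slab k j := by
    rintro ω ⟨hbox, hbad⟩
    simp only [Set.mem_setOf_eq, not_and] at hbad
    have hbad' := hbad hbox
    push_neg at hbad'
    obtain ⟨j, k, hk0, hkK, hlt⟩ := hbad'
    have hak1 : 1 ≤ a k := ha_pos k hk0
    have hakR : (1:ℝ) ≤ (a k : ℝ) := by exact_mod_cast hak1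
    have hnR : (1:ℝ) ≤ (n : ℝ) := by exact_mod_cast Nat.one_le_iff_ne_zero.2 (by omega)
    have hna : (1:ℝ) ≤ (n : ℝ) * (a k : ℝ) := by nlinarith
    -- k ∈ S
    have hkabs : ∀ i, |k i| ≤ K' := by
      intro i
      exact Int.le_floor.2 (by exact_mod_cast hkK i)
    have hkS : k ∈ S := by
      rw [hS, Finset.mem_erase]
      refine ⟨hk0, ?_⟩
      rw [Finset.mem_Icc]
      exact ⟨fun i => (abs_le.1 (hkabs i)).1, fun i => (abs_le.1 (hkabs i)).2⟩
    -- j ∈ T k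
    have hjT : j ∈ T k := by
      simp only [hT, Finset.mem_Icc, ← abs_le]
      have h1 : |(j:ℝ)| ≤ |(∑ i, (k i : ℝ) * ω i) + (j : ℝ)| + |∑ i, (k i : ℝ) * ω i| := by
        have h := abs_sub ((∑ i, (k i : ℝ) * ω i) + (j : ℝ)) (∑ i, (k i : ℝ) * ω i)
        simpa using h
      have h2 := hsum_bound k ω hbox
      have h3 : |(j:ℝ)| < κ * (1 + |(j:ℝ)|) + 8 * n * a k := by linarith
      have h4 : κ * (1 + |(j:ℝ)|) ≤ (1 + |(j:ℝ)|) / 4 := by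
        have : (0:ℝ) ≤ 1 + |(j:ℝ)| := by positivity
        nlinarith
      have h5 : |(j:ℝ)| < 1/3 + (32/3) * (n * a k) := by nlinarith
      have h6 : |(j:ℝ)| < 11 * n * a k + 1 := by nlinarith
      have h6' : ((|j| : ℤ) : ℝ) < 11 * (n:ℝ) * (a k : ℝ) + 1 := by
        rw [Int.cast_abs]; exact h6
      have hZ : |j| < 11 * (n:ℤ) * (a k : ℤ) + 1 := by exact_mod_cast h6'
      exact Int.lt_add_one_iff.1 hZ
    exact Set.mem_biUnion hkS (Set.mem_biUnion hjT ⟨hbox, hlt⟩)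
  refine le_trans (measure_mono hincl) ?_
  refine le_trans (measure_biUnion_finset_le S _) ?_
  -- per-k bound
  have hπ1 : (1:ℝ) ≤ 2 * π := by nlinarith [Real.pi_gt_three]
  have hkbound : ∀ k ∈ S, volume (⋃ j ∈ T k, slab k j) ≤
      ENNReal.ofReal (23 * n * K) * ENNReal.ofReal ((2*π)^m * (24 * n * κ)) := by
    intro k hkS
    have hk0 : k ≠ 0 := (Finset.mem_erase.1 hkS).1
    have hak1 : 1 ≤ a k := ha_pos k hk0
    have hakR : (1:ℝ) ≤ (a k : ℝ) := by exact_mod_cast hak1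
    have hnR : (1:ℝ) ≤ (n : ℝ) := by exact_mod_cast Nat.one_le_iff_ne_zero.2 (by omega)
    obtain ⟨i₀, -, hi₀⟩ := Finset.exists_mem_eq_sup Finset.univ Finset.univ_nonempty
      (fun i => (k i).natAbs)
    have hanat : a k = (k i₀).natAbs := by simp only [ha]; exact hi₀
    have hki₀ : k i₀ ≠ 0 := by
      intro h
      rw [hanat, h] at hak1
      simp at hak1
    have habs : |(k i₀ : ℝ)| = (a k : ℝ) := by
      rw [hanat, Nat.cast_natAbs, Int.cast_abs]
    -- a k ≤ K
    have hakK : (a k : ℝ) ≤ K := by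
      have hmem := (Finset.mem_erase.1 hkS).2
      rw [Finset.mem_Icc] at hmem
      have h1 : -K' ≤ k i₀ := hmem.1 i₀
      have h2 : k i₀ ≤ K' := hmem.2 i₀
      have h3 : |k i₀| ≤ K' := abs_le.2 ⟨h1, h2⟩
      have h4 : ((a k : ℕ) : ℤ) ≤ K' := by
        rw [hanat, Int.natCast_natAbs]
        exact h3
      have h5 : (a k : ℝ) ≤ (K' : ℝ) := by exact_mod_cast h4
      linarith
    calc volume (⋃ j ∈ T k, slab k j) ≤ ∑ j ∈ T k, volume (slab k j) :=
          measure_biUnion_finset_le _ _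
      _ ≤ ∑ _j ∈ T k, ENNReal.ofReal ((2*π)^m * (24 * n * κ)) := by
          refine Finset.sum_le_sum fun j hj => ?_
          refine le_trans (melnikov_slab_bound m k i₀ hki₀ (j : ℝ) (κ * (1 + |(j : ℝ)|))) ?_
          refine ENNReal.ofReal_le_ofReal ?_
          have hj' : |j| ≤ 11 * (n:ℤ) * (a k : ℤ) := by
            simp only [hT, Finset.mem_Icc, ← abs_le] at hj
            exact_mod_cast hj
          have hjR : |(j:ℝ)| ≤ 11 * n * a k := by
            rw [← Int.cast_abs]
            exact_mod_cast hj'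
          have hapos : (0:ℝ) < (a k : ℝ) := by linarith
          have hfrac : κ * (1 + |(j:ℝ)|) / |(k i₀ : ℝ)| ≤ 12 * n * κ := by
            rw [habs, div_le_iff₀ hapos]
            have hbig : 1 + |(j:ℝ)| ≤ 12 * n * a k := by nlinarith
            nlinarith [mul_le_mul_of_nonneg_left hbig hκ.le]
          have hpow : (0:ℝ) ≤ (2*π)^m := by positivity
          have : 2 * (κ * (1 + |(j:ℝ)|) / |(k i₀ : ℝ)|) ≤ 24 * n * κ := by linarith
          nlinarith [mul_le_mul_of_nonneg_left this hpow]
      _ = ((T k).card : ℝ≥0∞) * ENNReal.ofReal ((2*π)^m * (24 * n * κ)) := by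
          rw [Finset.sum_const, nsmul_eq_mul]
      _ ≤ ENNReal.ofReal (23 * n * K) * ENNReal.ofReal ((2*π)^m * (24 * n * κ)) := by
          refine mul_le_mul_left ?_ _
          have hcard : (T k).card = (22 * (n:ℤ) * (a k : ℤ) + 1).toNat := by
            simp only [hT, Int.card_Icc]
            congr 1
            ring
          have hcardR : ((T k).card : ℝ) ≤ 23 * n * K := by
            have hcn : ((T k).card : ℤ) = 22 * (n:ℤ) * (a k:ℤ) + 1 := by
              rw [hcard, Int.toNat_of_nonneg (by positivity)]
            have hcr : ((T k).card : ℝ) = 22 * (n:ℝ) * (a k:ℝ) + 1 := by exact_mod_cast hcn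
            rw [hcr]
            nlinarith [mul_le_mul_of_nonneg_left hakK (by positivity : (0:ℝ) ≤ 23 * (n:ℝ))]
          calc ((T k).card : ℝ≥0∞) = ENNReal.ofReal ((T k).card : ℝ) := by
                rw [ENNReal.ofReal_natCast]
            _ ≤ ENNReal.ofReal (23 * n * K) := ENNReal.ofReal_le_ofReal hcardR
  refine le_trans (Finset.sum_le_sum hkbound) ?_
  rw [Finset.sum_const, nsmul_eq_mul]
  -- card of S
  have hcardS : (S.card : ℝ≥0∞) ≤ ENNReal.ofReal ((3 * K)^n) := by
    rcases lt_or_ge K' 1 with h1 | h1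
    · -- K' = 0 : S is empty
      have hK'eq : K' = 0 := le_antisymm (by linarith) hK'0
      have hSempty : S = ∅ := by
        rw [hS, hK'eq]
        apply Finset.eq_empty_of_forall_notMem
        intro k hk
        rw [Finset.mem_erase, Finset.mem_Icc] at hk
        refine hk.1 (funext fun i => le_antisymm (hk.2.2 i) ?_)
        have := hk.2.1 i
        simpa using this
      rw [hSempty]
      simp
    · have hcard : S.card ≤ ((2 * K' + 1).toNat)^n := by
        calc S.card ≤ (Finset.Icc (fun _ : Fin n => -K') (fun _ => K')).card :=
              Finset.card_erase_le.trans (le_refl _)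
          _ = ((2 * K' + 1).toNat)^n := by
              rw [Pi.card_Icc]
              simp only [Int.card_Icc]
              rw [Finset.prod_const, Finset.card_univ, Fintype.card_fin]
              congr 1
              congr 1
              ring
      have hK'1R : (1:ℝ) ≤ (K' : ℝ) := by exact_mod_cast h1
      have h2 : ((2 * K' + 1).toNat : ℝ) ≤ 3 * K := by
        have h2' : (((2 * K' + 1).toNat : ℤ) : ℝ) = 2 * (K':ℝ) + 1 := by
          rw [Int.toNat_of_nonneg (by linarith)]
          push_cast; ring
        have h2'' : ((2 * K' + 1).toNat : ℝ) = 2 * (K':ℝ) + 1 := by exact_mod_cast h2'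
        rw [h2'']
        linarith
      have h3 : (S.card : ℝ) ≤ (3 * K)^n := by
        calc (S.card : ℝ) ≤ (((2 * K' + 1).toNat : ℝ))^n := by exact_mod_cast hcard
          _ ≤ (3 * K)^n := pow_le_pow_left₀ (by positivity) h2 n
      calc (S.card : ℝ≥0∞) = ENNReal.ofReal (S.card : ℝ) := by rw [ENNReal.ofReal_natCast]
        _ ≤ ENNReal.ofReal ((3 * K)^n) := ENNReal.ofReal_le_ofReal h3
  refine le_trans (mul_le_mul_left hcardS _) ?_
  rw [← ENNReal.ofReal_mul (by positivity), ← ENNReal.ofReal_mul (by positivity)]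
  refine ENNReal.ofReal_le_ofReal ?_
  -- final real arithmetic
  have hπ0 : (0:ℝ) < π := Real.pi_pos
  have hpow : (2*π)^m ≤ (2*π)^n := pow_le_pow_right₀ (by linarith) (by omega)
  have hKn : (0:ℝ) < K^n := by positivity
  calc (3 * K)^n * (23 * n * K * ((2*π)^m * (24 * n * κ)))
      = (552 * (n:ℝ)^2 * 3^n * (2*π)^m) * (K^(n+1) * κ) := by
        rw [mul_pow]
        ring
    _ ≤ (552 * (n:ℝ)^2 * 3^n * (2*π)^n) * (K^(n+1) * κ) := by
        have h0 : (0:ℝ) ≤ K^(n+1) * κ := by positivity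
        have h1 : (552 * (n:ℝ)^2 * 3^n * (2*π)^m) ≤ (552 * (n:ℝ)^2 * 3^n * (2*π)^n) := by
          have : (0:ℝ) ≤ 552 * (n:ℝ)^2 * 3^n := by positivity
          nlinarith
        nlinarith
    _ ≤ (552 * (n:ℝ)^2 * 3^n * (2*π)^n + 1) * K^(n+1) * κ := by
        have h0 : (0:ℝ) ≤ K^(n+1) * κ := by positivity
        nlinarith
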